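/- Let φ : ℝ → ℝ be defined by φ(t) = −2 e^{−|t|} and γ : ℝ → ℝ by γ(t) = 4|t| e^{−|t|}. Then for every t ∈ ℝ there holds ∫_ℝ φ(t−s) φ(s) ds + 2 φ(t) = γ(t); equivalently, ∫_ℝ 4 e^{−|t−s|} e^{−|s|} ds = 4(1+|t|) e^{−|t|} for every t ∈ ℝ. -/

import Mathlib

open MeasureTheory Set
open scoped Real

noncomputable section

/-- The density `φ(t) = -2 e^{-|t|}`. -/
def phiEx (t : ℝ) : ℝ := -2 * Real.exp (-|t|)

/-- The memory kernel `γ(t) = 4|t| e^{-|t|}`. -/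
def gammaEx (t : ℝ) : ℝ := 4 * |t| * Real.exp (-|t|)

lemma exp2_integrableOn_Iic : IntegrableOn (fun s : ℝ => Real.exp (2 * s)) (Iic 0) := by
  apply (integrableOn_exp_Iic 0).mono' (Real.continuous_exp.comp (continuous_const.mul continuous_id)).aestronglyMeasurable
  filter_upwards [ae_restrict_mem measurableSet_Iic] with s hs
  simp only [Function.comp, id_eq, Real.norm_eq_abs, abs_of_pos (Real.exp_pos _)]
  exact Real.exp_le_exp.2 (by simp only [Pi.mul_apply, id_eq]; simp at hs; linarith)

lemma exp2_integral_Iic : ∫ s in Iic (0:ℝ), Real.exp (2 * s) = 1 / 2 := by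
  have h1 : ∫ s in Iic (0:ℝ), Real.exp (2 * s)
      = ∫ x in Ioi (-(0:ℝ)), Real.exp (-(2 * x)) := by
    rw [← integral_comp_neg_Iic 0 (fun x => Real.exp (-(2 * x)))]
    norm_num
  have h2 : ∫ x in Ioi (0:ℝ), Real.exp (-(2 * x))
      = (2:ℝ)⁻¹ • ∫ x in Ioi (2 * (0:ℝ)), Real.exp (-x) := by
    exact integral_comp_mul_left_Ioi (fun x => Real.exp (-x)) 0 (by norm_num)
  rw [h1, neg_zero, h2]
  norm_num [integral_exp_neg_Ioi, integral_exp_Iic_zero]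

lemma exp2_integral_Ioi (t : ℝ) : ∫ s in Ioi t, Real.exp (-(2 * s))
    = Real.exp (-(2 * t)) / 2 := by
  have h2 : ∫ x in Ioi t, Real.exp (-(2 * x))
      = (2:ℝ)⁻¹ • ∫ x in Ioi (2 * t), Real.exp (-x) :=
    integral_comp_mul_left_Ioi (fun x => Real.exp (-x)) t (by norm_num)
  rw [h2, integral_exp_neg_Ioi, smul_eq_mul]
  ring_nf

lemma key (t : ℝ) (ht : 0 ≤ t) :
    (∫ s : ℝ, Real.exp (-|t - s|) * Real.exp (-|s|)) = (1 + t) * Real.exp (-t) := by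
  set f : ℝ → ℝ := fun s => Real.exp (-|t - s|) * Real.exp (-|s|) with hf
  have eq1 : EqOn f (fun s => Real.exp (-t) * Real.exp (2 * s)) (Iic 0) := by
    intro s hs
    simp only [mem_Iic] at hs
    simp only [hf]
    rw [abs_of_nonneg (by linarith), abs_of_nonpos hs, ← Real.exp_add, ← Real.exp_add]
    ring_nf
  have eq2 : EqOn f (fun _ => Real.exp (-t)) (Ioc 0 t) := by
    intro s hs
    simp only [mem_Ioc] at hs
    simp only [hf]
    rw [abs_of_nonneg (by linarith), abs_of_nonneg (by linarith), ← Real.exp_add]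
    ring_nf
  have eq3 : EqOn f (fun s => Real.exp t * Real.exp (-(2 * s))) (Ioi t) := by
    intro s hs
    simp only [mem_Ioi] at hs
    simp only [hf]
    rw [abs_of_nonpos (by linarith), abs_of_nonneg (by linarith), ← Real.exp_add,
      show -(-(t - s)) + -s = t + -(2 * s) by ring, Real.exp_add]
  have int1 : IntegrableOn f (Iic 0) :=
    (IntegrableOn.congr_fun (exp2_integrableOn_Iic.const_mul _) eq1.symm measurableSet_Iic)
  have int2 : IntegrableOn f (Ioc 0 t) :=
    (IntegrableOn.congr_fun (integrableOn_const measure_Ioc_lt_top.ne)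
      eq2.symm measurableSet_Ioc)
  have int3 : IntegrableOn f (Ioi t) := by
    apply IntegrableOn.congr_fun ?_ eq3.symm measurableSet_Ioi
    simpa [neg_mul, IntegrableOn] using (exp_neg_integrableOn_Ioi t (by norm_num : (0:ℝ) < 2)).const_mul
      (Real.exp t)
  have int23 : IntegrableOn f (Ioi 0) := by
    rw [← Ioc_union_Ioi_eq_Ioi ht]
    exact int2.union int3
  have split1 : (∫ s, f s) = (∫ s in Iic 0, f s) + ∫ s in Ioi 0, f s :=
    (intervalIntegral.integral_Iic_add_Ioi int1 int23).symm
  have split2 : (∫ s in Ioi (0:ℝ), f s) = (∫ s in Ioc 0 t, f s) + ∫ s in Ioi t, f s := by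
    rw [← Ioc_union_Ioi_eq_Ioi ht,
      setIntegral_union (Ioc_disjoint_Ioi le_rfl) measurableSet_Ioi int2 int3]
  have v1 : (∫ s in Iic (0:ℝ), f s) = Real.exp (-t) * (1 / 2) := by
    rw [setIntegral_congr_fun measurableSet_Iic eq1, integral_const_mul, exp2_integral_Iic]
  have v2 : (∫ s in Ioc (0:ℝ) t, f s) = t * Real.exp (-t) := by
    rw [setIntegral_congr_fun measurableSet_Ioc eq2, setIntegral_const]
    simp [Real.volume_Ioc, ENNReal.toReal_ofReal ht, ht]
  have v3 : (∫ s in Ioi t, f s) = Real.exp (-t) / 2 := by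
    rw [setIntegral_congr_fun measurableSet_Ioi eq3, integral_const_mul, exp2_integral_Ioi,
      ← mul_div_assoc, ← Real.exp_add, show t + -(2 * t) = -t by ring]
  rw [split1, split2, v1, v2, v3]
  ring

lemma key_abs (t : ℝ) :
    (∫ s : ℝ, Real.exp (-|t - s|) * Real.exp (-|s|)) = (1 + |t|) * Real.exp (-|t|) := by
  rcases le_or_gt 0 t with ht | ht
  · rw [abs_of_nonneg ht]; exact key t ht
  · rw [abs_of_neg ht]
    have : (∫ s : ℝ, Real.exp (-|t - s|) * Real.exp (-|s|))
        = ∫ s : ℝ, Real.exp (-|(-t) - s|) * Real.exp (-|s|) := by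
      rw [← integral_neg_eq_self (fun s : ℝ => Real.exp (-|t - s|) * Real.exp (-|s|))]
      congr 1
      ext s
      rw [abs_neg, show t - -s = -(-t - s) by ring, abs_neg]
    rw [this]
    exact key (-t) (by linarith)

/-- the fluctuation-dissipation relation `φ*φ + 2φ = γ` holds for
`φ(t) = -2e^{-|t|}` and `γ(t) = 4|t|e^{-|t|}`; equivalently,
`∫_ℝ 4 e^{-|t-s|} e^{-|s|} ds = 4(1+|t|) e^{-|t|}`. -/
theorem fdr_scalar_example (t : ℝ) :
    ((∫ s : ℝ, phiEx (t - s) * phiEx s) + 2 * phiEx t = gammaEx t) ∧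
    (∫ s : ℝ, 4 * Real.exp (-|t - s|) * Real.exp (-|s|)) =
      4 * (1 + |t|) * Real.exp (-|t|) := by
  have h4 : (∫ s : ℝ, 4 * Real.exp (-|t - s|) * Real.exp (-|s|))
      = 4 * (1 + |t|) * Real.exp (-|t|) := by
    have : (∫ s : ℝ, 4 * Real.exp (-|t - s|) * Real.exp (-|s|))
        = ∫ s : ℝ, 4 * (Real.exp (-|t - s|) * Real.exp (-|s|)) := by
      congr 1; ext s; ring
    rw [this, integral_const_mul, key_abs]
    ring
  constructor
  · have hp : (∫ s : ℝ, phiEx (t - s) * phiEx s)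
        = ∫ s : ℝ, 4 * Real.exp (-|t - s|) * Real.exp (-|s|) := by
      congr 1; ext s; simp only [phiEx]; ring
    rw [hp, h4]
    simp only [phiEx, gammaEx]
    ring
  · exact h4

end
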